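/- The alternating group A_5 is isomorphic to SL_2(F_4). -/

import Mathlib

inductive F4 : Type
  | O | I | A | B
  deriving DecidableEq

instance : Fintype F4 :=
  ⟨⟨↑[F4.O, F4.I, F4.A, F4.B], by decide⟩, fun x => by cases x <;> decide⟩

namespace F4

def add : F4 → F4 → F4
  | O, x => x
  | x, O => x
  | I, I => O | I, A => B | I, B => A
  | A, I => B | A, A => O | A, B => I
  | B, I => A | B, A => I | B, B => O

def mul : F4 → F4 → F4
  | O, _ => O
  | _, O => O
  | I, x => x
  | x, I => x
  | A, A => B | A, B => I
  | B, A => I | B, B => A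

def inv : F4 → F4
  | O => O | I => I | A => B | B => A

instance : Zero F4 := ⟨O⟩
instance : One F4 := ⟨I⟩
instance : Add F4 := ⟨add⟩
instance : Mul F4 := ⟨mul⟩
instance : Neg F4 := ⟨id⟩
instance : Inv F4 := ⟨inv⟩

instance : CommRing F4 where
  add_assoc := by decide
  zero_add := by decide
  add_zero := by decide
  add_comm := by decide
  neg_add_cancel := by decide
  mul_assoc := by decide
  one_mul := by decide
  mul_one := by decide
  mul_comm := by decide
  left_distrib := by decide
  right_distrib := by decide
  zero_mul := by decide
  mul_zero := by decide
  nsmul := nsmulRec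
  zsmul := zsmulRec

instance : Field F4 where
  exists_pair_ne := ⟨O, I, by decide⟩
  mul_inv_cancel := by decide
  inv_zero := rfl
  nnqsmul := _
  qsmul := _

end F4

open Matrix

namespace F4

/-- representatives of the 5 points of the projective line over `F4`. -/
def pt : Fin 5 → Fin 2 → F4 := ![![1,0], ![0,1], ![1,1], ![1,A], ![1,B]]

/-- which projective point a nonzero vector lies on. -/
def idx (v : Fin 2 → F4) : Fin 5 :=
  if v 0 = 0 then 1 else
  match mul (v 1) (inv (v 0)) with
  | O => 0 | I => 2 | A => 3 | B => 4

/-- scaling factor -/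
def sc (v : Fin 2 → F4) : F4 := if v 0 = 0 then v 1 else v 0

lemma pt_ne_zero : ∀ i : Fin 5, pt i ≠ 0 := by decide

lemma sc_smul_pt_idx : ∀ v : Fin 2 → F4, v ≠ 0 → sc v ≠ 0 ∧ sc v • pt (idx v) = v := by
  decide

lemma idx_smul : ∀ (k : F4), k ≠ 0 → ∀ v : Fin 2 → F4, v ≠ 0 → idx (k • v) = idx v := by
  decide

def fm (m : Matrix (Fin 2) (Fin 2) F4) (i : Fin 5) : Fin 5 := idx (m.mulVec (pt i))

lemma mulVec_ne_zero {m : Matrix (Fin 2) (Fin 2) F4} (hm : m.det = 1)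
    {v : Fin 2 → F4} (hv : v ≠ 0) : m.mulVec v ≠ 0 := by
  intro h
  have hu : IsUnit m.det := by rw [hm]; exact isUnit_one
  have : m⁻¹.mulVec (m.mulVec v) = v := by
    rw [Matrix.mulVec_mulVec, Matrix.nonsing_inv_mul m hu, Matrix.one_mulVec]
  rw [h, Matrix.mulVec_zero] at this
  exact hv this.symm

lemma fm_mul (m n : Matrix (Fin 2) (Fin 2) F4) (hm : m.det = 1) (hn : n.det = 1)
    (i : Fin 5) : fm (m * n) i = fm m (fm n i) := by
  have hv := pt_ne_zero i
  have hw : n.mulVec (pt i) ≠ 0 := mulVec_ne_zero hn hv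
  obtain ⟨hc, hsc⟩ := sc_smul_pt_idx _ hw
  have h1 : (m * n).mulVec (pt i) = m.mulVec (n.mulVec (pt i)) :=
    (Matrix.mulVec_mulVec _ _ _).symm
  have h2 : m.mulVec (n.mulVec (pt i)) = sc (n.mulVec (pt i)) • m.mulVec (pt (idx (n.mulVec (pt i)))) := by
    conv_lhs => rw [← hsc]
    rw [Matrix.mulVec_smul]
  unfold fm
  rw [h1, h2, idx_smul _ hc _ (mulVec_ne_zero hm (pt_ne_zero _))]

lemma fm_one : ∀ i, fm 1 i = i := by decide

end F4

namespace F4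

abbrev SL4 := Matrix.SpecialLinearGroup (Fin 2) F4

def phi : SL4 →* Equiv.Perm (Fin 5) := MonoidHom.mk' (fun g =>
  { toFun := fm g.1
    invFun := fm (g⁻¹).1
    left_inv := fun i => by
      rw [← fm_mul _ _ (g⁻¹).2 g.2, ← Matrix.SpecialLinearGroup.coe_mul,
        inv_mul_cancel, Matrix.SpecialLinearGroup.coe_one, fm_one]
    right_inv := fun i => by
      rw [← fm_mul _ _ g.2 (g⁻¹).2, ← Matrix.SpecialLinearGroup.coe_mul,
        mul_inv_cancel, Matrix.SpecialLinearGroup.coe_one, fm_one] })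
  (fun g h => Equiv.ext fun i => by
    simp only [Equiv.Perm.mul_apply, Equiv.coe_fn_mk]
    show fm ((g * h) : SL4).1 i = fm g.1 (fm h.1 i)
    rw [Matrix.SpecialLinearGroup.coe_mul]
    exact fm_mul _ _ g.2 h.2 i)

lemma inj_aux : ∀ a b c d : F4, a * d - b * c = 1 →
    (∀ i, fm !![a, b; c, d] i = i) → !![a, b; c, d] = 1 := by decide

lemma phi_injective : Function.Injective phi := by
  rw [injective_iff_map_eq_one]
  intro g hg
  have h5 : ∀ i, fm g.1 i = i := fun i => Equiv.ext_iff.mp hg i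
  apply Subtype.ext
  have he : g.1 = !![g.1 0 0, g.1 0 1; g.1 1 0, g.1 1 1] := Matrix.etaExpand_eq g.1 ▸ rfl
  have hdet : g.1 0 0 * g.1 1 1 - g.1 0 1 * g.1 1 0 = 1 := by
    rw [← Matrix.det_fin_two]; exact g.2
  calc g.1 = !![g.1 0 0, g.1 0 1; g.1 1 0, g.1 1 1] := he
    _ = 1 := inj_aux _ _ _ _ hdet (fun i => by rw [← he]; exact h5 i)

set_option maxRecDepth 20000 in
lemma sign_aux : ∀ a b c d : F4, a * d - b * c = 1 →
    ∀ σ : Equiv.Perm (Fin 5), (∀ i, σ i = fm !![a, b; c, d] i) →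
    Equiv.Perm.sign σ = 1 := by decide

lemma phi_mem_alternating (g : SL4) : phi g ∈ alternatingGroup (Fin 5) := by
  have he : g.1 = !![g.1 0 0, g.1 0 1; g.1 1 0, g.1 1 1] := Matrix.etaExpand_eq g.1 ▸ rfl
  have hdet : g.1 0 0 * g.1 1 1 - g.1 0 1 * g.1 1 0 = 1 := by
    rw [← Matrix.det_fin_two]; exact g.2
  exact sign_aux _ _ _ _ hdet (phi g) (fun i => by
    show fm g.1 i = _
    rw [← he])

end F4

namespace F4

def quad : Type := { q : F4 × F4 × F4 × F4 // q.1 * q.2.2.2 - q.2.1 * q.2.2.1 = 1 }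

instance : Fintype quad := by unfold quad; infer_instance
instance : DecidableEq quad := by unfold quad; infer_instance

def slEquivQuad : SL4 ≃ quad where
  toFun g := ⟨(g.1 0 0, g.1 0 1, g.1 1 0, g.1 1 1), by
    show _ = _
    rw [← Matrix.det_fin_two]; exact g.2⟩
  invFun q := ⟨!![q.1.1, q.1.2.1; q.1.2.2.1, q.1.2.2.2], by
    rw [Matrix.det_fin_two_of]; exact q.2⟩
  left_inv g := Subtype.ext (Matrix.etaExpand_eq g.1)
  right_inv q := Subtype.ext rfl

lemma card_quad : Fintype.card quad = 60 := by decide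

lemma card_SL4 : Fintype.card SL4 = 60 := by
  rw [Fintype.card_congr slEquivQuad, card_quad]

end F4

namespace F4

instance : CharP F4 2 := ringChar.eq_iff.mp
  (CharP.ringChar_of_prime_eq_zero Nat.prime_two (by decide))

instance : Algebra (ZMod 2) F4 := ZMod.algebra F4 2

noncomputable def f4EquivGalois : F4 ≃+* GaloisField 2 2 :=
  (GaloisField.algEquivGaloisField 2 2 (K := F4)
    (by rw [Nat.card_eq_fintype_card]; decide)).toRingEquiv

/-- SL₂ congruence along a ring equiv. -/
def slCongr {R S : Type*} [CommRing R] [CommRing S] (e : R ≃+* S) :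
    Matrix.SpecialLinearGroup (Fin 2) R ≃* Matrix.SpecialLinearGroup (Fin 2) S where
  toFun := Matrix.SpecialLinearGroup.map (e : R →+* S)
  invFun := Matrix.SpecialLinearGroup.map (e.symm : S →+* R)
  left_inv g := Subtype.ext (by ext i j; simp)
  right_inv g := Subtype.ext (by ext i j; simp)
  map_mul' := map_mul _

def psi : SL4 →* alternatingGroup (Fin 5) :=
  phi.codRestrict (alternatingGroup (Fin 5)) phi_mem_alternating

lemma psi_bijective : Function.Bijective psi := by
  rw [Fintype.bijective_iff_injective_and_card]
  constructor
  · intro x y h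
    exact phi_injective (congrArg Subtype.val h)
  · rw [card_SL4]
    have h : 2 * Fintype.card (alternatingGroup (Fin 5)) = 120 := by
      rw [two_mul_card_alternatingGroup, Fintype.card_perm]
      rfl
    omega

end F4

/-- The alternating group `A₅` is isomorphic to `SL₂(𝔽₄)`. -/
theorem stmt_10 :
    Nonempty (alternatingGroup (Fin 5) ≃*
      Matrix.SpecialLinearGroup (Fin 2) (GaloisField 2 2)) := by
  exact ⟨((MulEquiv.ofBijective F4.psi F4.psi_bijective).symm.trans
    (F4.slCongr F4.f4EquivGalois))⟩
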